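/- Fix 1 ≤ k ≤ n and a sign γ, and let D be the associated chain homotopy on I^n. For 1 ≤ q ≤ n, the chains D⟨u_n⟩_{q−1}^+ and −D⟨u_n⟩_{q−1}^− are sums (with coefficient 1) of standard basis elements ∂̌_{i(n−q)}^{α(n−q)}⋯∂̌_{i(1)}^{α(1)} u_q corresponding to precubical operations ∂_{i(1)}^{α(1)}⋯∂_{i(n−q)}^{α(n−q)} complementary to ∂_k^γ. -/

import Mathlib

namespace CubicalNerve

/-- Signs: `true` is `+`, `false` is `−`, as an integer `±1`. -/
def sgn (α : Bool) : ℤ := if α then 1 else -1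

/-- Sign twisting: `twist α m` is the sign `(−1)^m α`. -/
def twist (α : Bool) (m : ℕ) : Bool := if Even m then α else !α

/-- A standard basis element of the chain complex `Iⁿ`: the factor at position `i` is
`u₁` when the value is `none`, and `∂^α u₁` when the value is `some α`. -/
abbrev Cell (n : ℕ) := Fin n → Option Bool

/-- The dimension of a standard basis element: the number of `u₁` factors. -/
def Cell.dim {n : ℕ} (σ : Cell n) : ℕ := (Finset.univ.filter fun i => σ i = none).card

/-- The number of `u₁` factors strictly before position `i`. -/
def Cell.below {n : ℕ} (σ : Cell n) (i : Fin n) : ℕ :=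
  (Finset.univ.filter fun j => j < i ∧ σ j = none).card

/-- The number of `∂^± u₁` factors at positions `≤ j`. -/
def Cell.sLe {n : ℕ} (σ : Cell n) (j : Fin n) : ℕ :=
  (Finset.univ.filter fun i => i ≤ j ∧ σ i ≠ none).card

/-- The chain groups of `Iⁿ` (all degrees taken together): the free abelian group
on the standard basis elements. -/
abbrev Chain (n : ℕ) := Cell n →₀ ℤ

/-- The boundary of a standard basis element (tensor-product boundary formula). -/
noncomputable def bdCell {n : ℕ} (σ : Cell n) : Chain n :=
  ∑ i ∈ Finset.univ.filter (fun i => σ i = none),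
    ((-1 : ℤ) ^ σ.below i) •
      (Finsupp.single (Function.update σ i (some true)) 1 -
        Finsupp.single (Function.update σ i (some false)) 1)

/-- The boundary operator of `Iⁿ`. -/
noncomputable def bd {n : ℕ} (c : Chain n) : Chain n := c.sum fun σ z => z • bdCell σ

/-- The positive part of a chain. -/
noncomputable def posPart {n : ℕ} (c : Chain n) : Chain n :=
  Finsupp.mapRange (fun z => max z 0) (by simp) c

/-- The negative part of a chain. -/
noncomputable def negPart {n : ℕ} (c : Chain n) : Chain n :=
  Finsupp.mapRange (fun z => max (-z) 0) (by simp) c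

/-- `∂^α`: the positive (resp. negative) part of the boundary. -/
noncomputable def bdp {n : ℕ} (α : Bool) (c : Chain n) : Chain n :=
  if α then posPart (bd c) else negPart (bd c)

/-- The atom `⟨σ⟩`: `atom σ α q` is the chain `⟨σ⟩_q^α = (∂^α)^{p−q} σ` for `q ≤ p = dim σ`,
and `0` for `q > p`. -/
noncomputable def atom {n : ℕ} (σ : Cell n) (α : Bool) (q : ℕ) : Chain n :=
  if q ≤ σ.dim then (bdp α)^[σ.dim - q] (Finsupp.single σ 1) else 0

/-- The augmentation (extended by zero on positive-degree chains). -/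
noncomputable def aug {n : ℕ} (c : Chain n) : ℤ := c.sum fun σ z => if σ.dim = 0 then z else 0

/-- The top basis element `u_n = u₁ ⊗ ⋯ ⊗ u₁` of `Iⁿ`. -/
def un (n : ℕ) : Cell n := fun _ => none

/-- The basis element `u_{k-1} ⊗ ∂^γ u₁ ⊗ u_{n-k}` (here `k : Fin n` is `k−1` in the
1-indexed notation of the paper). -/
def kcell {n : ℕ} (k : Fin n) (γ : Bool) : Cell n := Function.update (un n) k (some γ)

/-- Membership in `ν Iⁿ` for a double sequence `x`, where `x i α` is `x_i^α`:
each `x_i^α` is an `i`-chain which is a nonnegative sum of standard basis elements,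
`ε x_0^- = ε x_0^+ = 1`, and `x_i^+ − x_i^− = ∂ x_{i+1}^- = ∂ x_{i+1}^+`. -/
def IsNu {n : ℕ} (x : ℕ → Bool → Chain n) : Prop :=
  (∀ i α, ∀ σ ∈ (x i α).support, Cell.dim σ = i) ∧
  (∀ i α, 0 ≤ x i α) ∧
  (∀ α, aug (x 0 α) = 1) ∧
  (∀ i α, x i true - x i false = bd (x (i + 1) α))

/-- The double sequence of an atom. -/
noncomputable def atomSeq {n : ℕ} (σ : Cell n) : ℕ → Bool → Chain n := fun i α => atom σ α i

/-- The identity operation `d_p^α` on double sequences. -/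
noncomputable def dOp {n : ℕ} (p : ℕ) (α : Bool) (x : ℕ → Bool → Chain n) : ℕ → Bool → Chain n :=
  fun i β => if i < p then x i β else if i = p then x p α else 0

/-- The composition `x #_p y = x − d_p⁺ x + y`, formed termwise. -/
noncomputable def comp {n : ℕ} (p : ℕ) (x y : ℕ → Bool → Chain n) : ℕ → Bool → Chain n :=
  fun i β => x i β - dOp p true x i β + y i β

/-- Insertion of a new tensor factor at (0-indexed) position `i` (clamped into range). -/
def insertCell {m : ℕ} (i : ℕ) (v : Option Bool) (σ : Cell m) : Cell (m + 1) :=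
  Fin.insertNth ⟨min i m, Nat.lt_succ_of_le (min_le_right i m)⟩ v σ

/-- The face chain map `∂̌_i^α : Iᵐ → Iᵐ⁺¹` (with `i` 1-indexed, `1 ≤ i ≤ m+1`),
given on standard basis elements by `x ⊗ y ↦ x ⊗ ∂^α u₁ ⊗ y`. -/
noncomputable def faceL (m : ℕ) (i : ℕ) (α : Bool) : Chain m →ₗ[ℤ] Chain (m + 1) :=
  Finsupp.lmapDomain ℤ ℤ (insertCell (i - 1) (some α))

/-- `IsFaceComposite F` means that `F` is a composite of face chain maps `∂̌_i^α`. -/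
inductive IsFaceComposite : ∀ {m n : ℕ}, (Chain m →ₗ[ℤ] Chain n) → Prop
  | id (m : ℕ) : IsFaceComposite (LinearMap.id : Chain m →ₗ[ℤ] Chain m)
  | step {m d : ℕ} {F : Chain m →ₗ[ℤ] Chain d} (i : ℕ) (α : Bool)
      (h1 : 1 ≤ i) (h2 : i ≤ d + 1) :
      IsFaceComposite F → IsFaceComposite ((faceL d i α).comp F)

/-- `stdC m p ι a` is the composite `∂̌_{ι 0}^{a 0} ∘ ⋯ ∘ ∂̌_{ι (p-1)}^{a (p-1)} : Iᵐ → Iᵐ⁺ᵖ`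
(so `∂̌_{ι (p-1)}^{a (p-1)}` is applied first). -/
noncomputable def stdC (m : ℕ) :
    (p : ℕ) → (Fin p → ℕ) → (Fin p → Bool) → (Chain m →ₗ[ℤ] Chain (m + p))
  | 0, _, _ => LinearMap.id
  | p + 1, ι, a =>
      (faceL (m + p) (ι 0) (a 0)).comp (stdC m p (fun r => ι r.succ) (fun r => a r.succ))

/-- Transport of chains along an equality of dimensions. -/
noncomputable def chainCongr {a b : ℕ} (h : a = b) : Chain a ≃ₗ[ℤ] Chain b :=
  Finsupp.domLCongr (Equiv.arrowCongr (finCongr h) (Equiv.refl (Option Bool)))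

/-- The basis element of `I¹` with value `v`. -/
def cellOf (v : Option Bool) : Cell 1 := fun _ => v

/-- The `n`-fold tensor product of chains of `I¹`, as a chain of `Iⁿ`. -/
noncomputable def tens {n : ℕ} (c : Fin n → Chain 1) : Chain n :=
  Finsupp.equivFunOnFinite.symm fun σ => ∏ j, (c j) (cellOf (σ j))

/-- `τ` has an "extreme" standard decomposition of constant sign `ε`: for its `r`-th
factor `∂_{i}^{α}` (`r`, `i` 1-indexed), `(−1)^{i−r} α = ε`. -/
def ExtremeSign {n : ℕ} (τ : Cell n) (ε : ℤ) : Prop :=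
  ∀ (j : Fin n) (α : Bool), τ j = some α →
    (-1 : ℤ) ^ ((j : ℕ) + 1 + τ.sLe j) * sgn α = ε

/-- The basis element `τ` corresponds to a precubical operation complementary to
`∂_{k+1}^γ` (with `k : Fin n`, i.e. `k+1` in the paper's 1-indexing): its standard
decomposition has no factor at position `k`, and inserting `∂_{k+1}^{−γ}` produces
a standard decomposition of constant sign. -/
def CellCompl {n : ℕ} (k : Fin n) (γ : Bool) (τ : Cell n) : Prop :=
  τ k = none ∧ ∃ ε : ℤ, ExtremeSign (Function.update τ k (some (!γ))) ε

/-- The chain homotopy `D` associated to the face `∂_{k+1}^γ` (0-indexed `k : Fin n`). -/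
noncomputable def Dfun {n : ℕ} (k : Fin n) (γ : Bool) (c : Chain n) : Chain n :=
  c.sum fun τ z =>
    if τ k = some (!γ) then
      (z * (-((-1 : ℤ) ^ Cell.below τ k * sgn γ))) •
        Finsupp.single (Function.update τ k (none : Option Bool)) 1
    else 0

/-- The double sequence `A_q^β` of Proposition 6.4. -/
noncomputable def Aseq {n : ℕ} (k : Fin n) (γ : Bool) (q : ℕ) (β : Bool) :
    ℕ → Bool → Chain n :=
  fun i α =>
    if i + 1 < q then atom (un n) α i
    else if i + 1 = q then
      (if α = β then atom (un n) β i
       else atom (un n) β i - bd (Dfun k γ (atom (un n) β i)))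
    else if i = q then sgn β • Dfun k γ (atom (un n) β (q - 1))
    else 0

/-- The elements `A_q` of Proposition 6.5, defined inductively from the `A_q^β` by
`A_0 = ⟨σ⟩` and `A_q = A_q^− #_{q−1} A_{q−1} #_{q−1} A_q^+`. -/
noncomputable def Aq {n : ℕ} (k : Fin n) (γ : Bool) : ℕ → (ℕ → Bool → Chain n)
  | 0 => atomSeq (kcell k γ)
  | q + 1 => comp q (comp q (Aseq k γ (q + 1) false) (Aq k γ q)) (Aseq k γ (q + 1) true)


lemma neg_one_pow_congr {a b : ℕ} (h : a % 2 = b % 2) : ((-1:ℤ))^a = (-1)^b := by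
  rw [← Nat.div_add_mod a 2, ← Nat.div_add_mod b 2, pow_add, pow_add, pow_mul, pow_mul, h]
  norm_num

lemma sgn_not (β : Bool) : sgn (!β) = - sgn β := by cases β <;> simp [sgn]
lemma sgn_sq (β : Bool) : sgn β * sgn β = 1 := by cases β <;> simp [sgn]
lemma sgn_ne_zero (β : Bool) : sgn β ≠ 0 := by cases β <;> simp [sgn]

/-- number of `∂` factors strictly before `j`. -/
def Cell.sLt {n : ℕ} (σ : Cell n) (j : Fin n) : ℕ :=
  (Finset.univ.filter fun i => i < j ∧ σ i ≠ none).card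

lemma below_add_sLt {n : ℕ} (σ : Cell n) (j : Fin n) : σ.below j + σ.sLt j = j := by
  classical
  rw [Cell.below, Cell.sLt, ← Finset.card_union_of_disjoint]
  · have : (Finset.univ.filter fun i => i < j ∧ σ i = none) ∪
        (Finset.univ.filter fun i => i < j ∧ σ i ≠ none) = Finset.Iio j := by
      ext i; simp [Finset.mem_filter, Finset.mem_Iio]; tauto
    rw [this, Fin.card_Iio]
  · simp only [Finset.disjoint_filter]
    tauto

lemma sLe_eq_sLt {n : ℕ} (σ : Cell n) (j : Fin n) (h : σ j = none) : σ.sLe j = σ.sLt j := by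
  classical
  rw [Cell.sLe, Cell.sLt]
  congr 1
  ext i
  simp only [Finset.mem_filter, Finset.mem_univ, true_and]
  constructor
  · rintro ⟨h1, h2⟩
    rcases lt_or_eq_of_le h1 with h3 | h3
    · exact ⟨h3, h2⟩
    · exact absurd (h3 ▸ h) h2
  · rintro ⟨h1, h2⟩; exact ⟨le_of_lt h1, h2⟩

lemma sLe_eq_sLt_succ {n : ℕ} (σ : Cell n) (j : Fin n) (h : σ j ≠ none) :
    σ.sLe j = σ.sLt j + 1 := by
  classical
  rw [Cell.sLe, Cell.sLt]
  rw [show (Finset.univ.filter fun i => i ≤ j ∧ σ i ≠ none) =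
      insert j (Finset.univ.filter fun i => i < j ∧ σ i ≠ none) by
    ext i
    simp only [Finset.mem_insert, Finset.mem_filter, Finset.mem_univ, true_and]
    constructor
    · rintro ⟨h1, h2⟩
      rcases lt_or_eq_of_le h1 with h3 | h3
      · exact Or.inr ⟨h3, h2⟩
      · exact Or.inl h3
    · rintro (rfl | ⟨h1, h2⟩)
      · exact ⟨le_refl _, h⟩
      · exact ⟨le_of_lt h1, h2⟩]
  rw [Finset.card_insert_of_notMem (by simp)]


lemma below_update {n : ℕ} (σ : Cell n) (j : Fin n) (v : Option Bool) (i : Fin n)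
    (h : i ≤ j) : Cell.below (Function.update σ j v) i = σ.below i := by
  classical
  rw [Cell.below, Cell.below]
  congr 1
  apply Finset.filter_congr
  intro x _
  by_cases hx : x < i
  · rw [Function.update_of_ne (by exact ne_of_lt (lt_of_lt_of_le hx h))]
  · simp [hx]

lemma sLe_update {n : ℕ} (σ : Cell n) (j : Fin n) (v : Option Bool) (i : Fin n)
    (h : i < j) : Cell.sLe (Function.update σ j v) i = σ.sLe i := by
  classical
  rw [Cell.sLe, Cell.sLe]
  congr 1
  apply Finset.filter_congr
  intro x _
  by_cases hx : x ≤ i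
  · rw [Function.update_of_ne (by exact ne_of_lt (lt_of_le_of_lt hx h))]
  · simp [hx]

lemma sLe_update_none {n : ℕ} (σ : Cell n) (j : Fin n) (hj : σ j ≠ none) (i : Fin n)
    (h : j < i) : Cell.sLe (Function.update σ j none) i + 1 = σ.sLe i := by
  classical
  rw [Cell.sLe, Cell.sLe]
  rw [show (Finset.univ.filter fun x => x ≤ i ∧ σ x ≠ none) =
      insert j (Finset.univ.filter fun x => x ≤ i ∧ Function.update σ j none x ≠ none) by
    ext x
    simp only [Finset.mem_insert, Finset.mem_filter, Finset.mem_univ, true_and]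
    by_cases hx : x = j
    · subst hx; simp [le_of_lt h, hj]
    · rw [Function.update_of_ne hx]; tauto]
  rw [Finset.card_insert_of_notMem (by simp)]

lemma dim_update_none {n : ℕ} (σ : Cell n) (j : Fin n) (hj : σ j ≠ none) :
    Cell.dim (Function.update σ j none) = σ.dim + 1 := by
  classical
  rw [Cell.dim, Cell.dim]
  rw [show (Finset.univ.filter fun x => Function.update σ j none x = none) =
      insert j (Finset.univ.filter fun x => σ x = none) by
    ext x
    simp only [Finset.mem_insert, Finset.mem_filter, Finset.mem_univ, true_and]
    by_cases hx : x = j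
    · subst hx; simp
    · rw [Function.update_of_ne hx]; tauto]
  rw [Finset.card_insert_of_notMem (by simp [hj])]

lemma dim_update_some {n : ℕ} (σ : Cell n) (j : Fin n) (hj : σ j = none) (b : Bool) :
    Cell.dim (Function.update σ j (some b)) + 1 = σ.dim := by
  classical
  rw [Cell.dim, Cell.dim]
  rw [show (Finset.univ.filter fun x => σ x = none) =
      insert j (Finset.univ.filter fun x => Function.update σ j (some b) x = none) by
    ext x
    simp only [Finset.mem_insert, Finset.mem_filter, Finset.mem_univ, true_and]
    by_cases hx : x = j
    · subst hx; simp [hj]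
    · rw [Function.update_of_ne hx]; tauto]
  rw [Finset.card_insert_of_notMem (by simp)]

lemma update_eq_iff' {n : ℕ} (σ : Cell n) (j : Fin n) (v : Option Bool) :
    Function.update σ j v = σ ↔ σ j = v := by
  constructor
  · intro h
    have := congrFun h j
    simpa using this.symm
  · intro h
    rw [← h, Function.update_eq_self]

noncomputable def bdCoef {n : ℕ} (c : Chain n) (σ : Cell n) (j : Fin n) : ℤ :=
  match σ j with
  | none => 0
  | some β => (-1:ℤ)^(Cell.below σ j) * sgn β * c (Function.update σ j none)

lemma bd_apply {n : ℕ} (c : Chain n) (σ : Cell n) :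
    bd c σ = ∑ j, bdCoef c σ j := by
  classical
  rw [bd, Finsupp.sum_fintype _ _ (by intro; simp)]
  rw [Finset.sum_apply']
  have step : ∀ τ : Cell n, (c τ • bdCell τ) σ =
      ∑ j : Fin n, (if τ j = none then
        c τ * ((-1:ℤ)^(Cell.below τ j) *
          ((if Function.update τ j (some true) = σ then (1:ℤ) else 0) -
           (if Function.update τ j (some false) = σ then (1:ℤ) else 0))) else 0) := by
    intro τ
    rw [Finsupp.smul_apply, bdCell, Finset.sum_apply', Finset.sum_filter, smul_eq_mul,
      Finset.mul_sum]
    congr 1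
    ext j
    by_cases hj : τ j = none
    · simp only [hj, if_true]
      rw [Finsupp.smul_apply, Finsupp.sub_apply, Finsupp.single_apply, Finsupp.single_apply]
      simp [smul_eq_mul]
    · simp [hj]
  simp only [step]
  rw [Finset.sum_comm]
  apply Finset.sum_congr rfl
  intro j _
  rcases hσj : σ j with _ | β
  · have hb : bdCoef c σ j = 0 := by unfold bdCoef; rw [hσj]
    rw [hb]
    apply Finset.sum_eq_zero
    intro τ _
    by_cases hτ : τ j = none
    · have h1 : Function.update τ j (some true) ≠ σ := by
        intro h; have := congrFun h j; simp [hσj] at this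
      have h2 : Function.update τ j (some false) ≠ σ := by
        intro h; have := congrFun h j; simp [hσj] at this
      simp [hτ, h1, h2]
    · simp [hτ]
  · have hb : bdCoef c σ j =
        (-1:ℤ)^(Cell.below σ j) * sgn β * c (Function.update σ j none) := by
      unfold bdCoef; rw [hσj]
    rw [hb]
    rw [Finset.sum_eq_single (Function.update σ j none)]
    · have hτ0 : Function.update σ j none j = none := by simp
      simp only [hτ0, if_true]
      have hupd : ∀ b : Bool, Function.update (Function.update σ j none) j (some b) =
          Function.update σ j (some b) := by
        intro b; rw [Function.update_idem]
      have hself : ∀ b : Bool, (Function.update σ j (some b) = σ) ↔ β = b := by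
        intro b
        rw [update_eq_iff', hσj]
        constructor
        · intro h; exact (Option.some_injective _ h)
        · intro h; rw [h]
      rw [below_update σ j none j (le_refl j)]
      rcases β with _ | _
      · have e1 : ¬ (Function.update σ j (some true) = σ) := by
          rw [hself]; simp
        have e2 : Function.update σ j (some false) = σ := by rw [hself]
        rw [hupd, hupd]
        simp only [e1, e2, if_true, if_false]
        simp [sgn]
        ring
      · have e1 : Function.update σ j (some true) = σ := by rw [hself]
        have e2 : ¬ (Function.update σ j (some false) = σ) := by
          rw [hself]; simp
        rw [hupd, hupd]
        simp only [e1, e2, if_true, if_false]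
        simp [sgn]
        ring
    · intro τ _ hne
      by_cases hτ : τ j = none
      · have key : ∀ b : Bool, Function.update τ j (some b) ≠ σ := by
          intro b h
          apply hne
          funext i
          by_cases hi : i = j
          · subst hi; simp [hτ]
          · rw [Function.update_of_ne hi]
            have := congrFun h i
            rwa [Function.update_of_ne hi] at this
        simp [hτ, key true, key false]
      · simp [hτ]
    · intro h
      exact absurd (Finset.mem_univ _) h

open Classical in
noncomputable def ext (n p : ℕ) (a : ℤ) : Chain n :=
  Finsupp.equivFunOnFinite.symm fun τ => if Cell.dim τ = p ∧ ExtremeSign τ a then (1:ℤ) else 0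

lemma ext_apply (n p : ℕ) (a : ℤ) (τ : Cell n) [Decidable (Cell.dim τ = p ∧ ExtremeSign τ a)] :
    ext n p a τ = if Cell.dim τ = p ∧ ExtremeSign τ a then (1:ℤ) else 0 := by
  classical
  show (Finsupp.equivFunOnFinite.symm _ : Chain n) τ = _
  rw [Finsupp.coe_equivFunOnFinite_symm]
  congr

/-- the sign of the `i`-th factor in the standard decomposition. -/
def sVal {n : ℕ} (σ : Cell n) (i : Fin n) (β : Bool) : ℤ :=
  (-1:ℤ)^((i:ℕ)+1+Cell.sLe σ i) * sgn β

def Ps {n : ℕ} (σ : Cell n) (a : ℤ) (m : ℕ) : Prop :=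
  ∀ i : Fin n, (i:ℕ) < m → ∀ β, σ i = some β → sVal σ i β = a

def Qs {n : ℕ} (σ : Cell n) (a : ℤ) (m : ℕ) : Prop :=
  ∀ i : Fin n, m ≤ (i:ℕ) → ∀ β, σ i = some β → sVal σ i β = -a

open Classical in
noncomputable def Pv {n : ℕ} (σ : Cell n) (a : ℤ) (m : ℕ) : ℤ := if Ps σ a m then 1 else 0
open Classical in
noncomputable def Qv {n : ℕ} (σ : Cell n) (a : ℤ) (m : ℕ) : ℤ := if Qs σ a m then 1 else 0

lemma key (n p : ℕ) (hp : p < n) (a : ℤ) (ha : a = 1 ∨ a = -1) :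
    bd (ext n (p+1) a) = ext n p 1 - ext n p (-1) := by
  classical
  ext σ
  rw [bd_apply, Finsupp.sub_apply, ext_apply, ext_apply]
  by_cases hdim : Cell.dim σ = p
  · -- main case
    have hane : -a ≠ a := by rcases ha with rfl | rfl <;> norm_num
    have term : ∀ j : Fin n, bdCoef (ext n (p+1) a) σ j =
        a * (Pv σ a ((j:ℕ)+1) * Qv σ a ((j:ℕ)+1)) - a * (Pv σ a (j:ℕ) * Qv σ a (j:ℕ)) := by
      intro j
      rcases hσj : σ j with _ | β
      · have hb : bdCoef (ext n (p+1) a) σ j = 0 := by unfold bdCoef; rw [hσj]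
        have hPP : Pv σ a ((j:ℕ)+1) = Pv σ a (j:ℕ) := by
          unfold Pv
          congr 1
          unfold Ps
          simp only [eq_iff_iff]
          constructor
          · intro h i hi β hiβ; exact h i (by omega) β hiβ
          · intro h i hi β hiβ
            rcases Nat.lt_succ_iff_lt_or_eq.mp hi with h' | h'
            · exact h i h' β hiβ
            · exfalso
              have : i = j := Fin.ext h'
              rw [this, hσj] at hiβ; cases hiβ
        have hQQ : Qv σ a ((j:ℕ)+1) = Qv σ a (j:ℕ) := by
          unfold Qv
          congr 1
          unfold Qs
          simp only [eq_iff_iff]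
          constructor
          · intro h i hi β hiβ
            rcases Nat.lt_or_ge (j:ℕ) (i:ℕ) with h' | h'
            · exact h i (by omega) β hiβ
            · have : i = j := Fin.ext (le_antisymm h' hi)
              rw [this, hσj] at hiβ; cases hiβ
          · intro h i hi β hiβ; exact h i (by omega) β hiβ
        rw [hb, hPP, hQQ]; ring
      · -- σ j = some β
        have hjne : σ j ≠ none := by rw [hσj]; exact fun h => by cases h
        have hb : bdCoef (ext n (p+1) a) σ j =
            (-1:ℤ)^(Cell.below σ j) * sgn β * (ext n (p+1) a) (Function.update σ j none) := by
          unfold bdCoef; rw [hσj]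
        set τ := Function.update σ j none with hτ
        have hτdim : Cell.dim τ = p + 1 := by rw [hτ, dim_update_none σ j hjne, hdim]
        have hES : ExtremeSign τ a ↔ (Ps σ a (j:ℕ) ∧ Qs σ a ((j:ℕ)+1)) := by
          constructor
          · intro h
            constructor
            · intro i hi β' hiβ'
              have hij : i ≠ j := fun he => by rw [he] at hi; omega
              have h1 : τ i = some β' := by rw [hτ, Function.update_of_ne hij, hiβ']
              have := h i β' h1
              rw [hτ, sLe_update σ j none i (by exact Fin.lt_def.mpr hi)] at this
              exact this
            · intro i hi β' hiβ'
              have hij : (j:ℕ) < (i:ℕ) := by omega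
              have hijne : i ≠ j := fun he => by rw [he] at hij; omega
              have h1 : τ i = some β' := by rw [hτ, Function.update_of_ne hijne, hiβ']
              have h2 := h i β' h1
              have h3 : Cell.sLe τ i + 1 = Cell.sLe σ i := by
                rw [hτ]; exact sLe_update_none σ j hjne i (Fin.lt_def.mpr hij)
              have h4 : (-1:ℤ)^((i:ℕ)+1+Cell.sLe τ i) = -(-1:ℤ)^((i:ℕ)+1+Cell.sLe σ i) := by
                rw [← h3]
                rw [show (i:ℕ)+1+(Cell.sLe τ i + 1) = ((i:ℕ)+1+Cell.sLe τ i) + 1 by ring]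
                rw [pow_succ]
                ring
              rw [h4] at h2
              unfold sVal
              linarith [h2]
          · rintro ⟨h1, h2⟩
            intro i β' hiβ'
            have hij : i ≠ j := by
              intro he; rw [he, hτ, Function.update_self] at hiβ'; cases hiβ'
            have hσi : σ i = some β' := by rwa [hτ, Function.update_of_ne hij] at hiβ'
            rcases Nat.lt_or_ge (i:ℕ) (j:ℕ) with h' | h'
            · have := h1 i h' β' hσi
              unfold sVal at this
              rw [hτ, sLe_update σ j none i (Fin.lt_def.mpr h')]
              exact this
            · have hij' : (j:ℕ) < (i:ℕ) := by
                rcases Nat.lt_or_ge (j:ℕ) (i:ℕ) with h'' | h''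
                · exact h''
                · exact absurd (Fin.ext (le_antisymm h'' h')) hij
              have hthis := h2 i (by omega) β' hσi
              unfold sVal at hthis
              have h3 : Cell.sLe τ i + 1 = Cell.sLe σ i := by
                rw [hτ]; exact sLe_update_none σ j hjne i (Fin.lt_def.mpr hij')
              have h4 : (-1:ℤ)^((i:ℕ)+1+Cell.sLe τ i) = -(-1:ℤ)^((i:ℕ)+1+Cell.sLe σ i) := by
                rw [← h3]
                rw [show (i:ℕ)+1+(Cell.sLe τ i + 1) = ((i:ℕ)+1+Cell.sLe τ i) + 1 by ring]
                rw [pow_succ]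
                ring
              rw [h4]
              linarith [hthis]
        have hval : (ext n (p+1) a) τ = Pv σ a (j:ℕ) * Qv σ a ((j:ℕ)+1) := by
          rw [ext_apply]
          unfold Pv Qv
          by_cases hpq : Ps σ a (j:ℕ) ∧ Qs σ a ((j:ℕ)+1)
          · rw [if_pos ⟨hτdim, hES.mpr hpq⟩, if_pos hpq.1, if_pos hpq.2]; norm_num
          · rw [if_neg (fun h => hpq (hES.mp h.2))]
            rcases not_and_or.mp hpq with h | h
            · rw [if_neg h]; ring
            · rw [if_neg h]; ring
        have hsign : (-1:ℤ)^(Cell.below σ j) * sgn β = sVal σ j β := by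
          unfold sVal
          congr 1
          apply neg_one_pow_congr
          have e1 := below_add_sLt σ j
          have e2 := sLe_eq_sLt_succ σ j hjne
          omega
        have hPsplit : Pv σ a ((j:ℕ)+1) = Pv σ a (j:ℕ) * (if sVal σ j β = a then 1 else 0) := by
          unfold Pv
          by_cases h : Ps σ a ((j:ℕ)+1)
          · rw [if_pos h, if_pos, if_pos]
            · norm_num
            · exact h j (by omega) β hσj
            · intro i hi β' hiβ'; exact h i (by omega) β' hiβ'
          · rw [if_neg h]
            by_cases h1 : Ps σ a (j:ℕ)
            · rw [if_pos h1]
              rw [if_neg]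
              · ring
              · intro hc
                apply h
                intro i hi β' hiβ'
                rcases Nat.lt_succ_iff_lt_or_eq.mp hi with h' | h'
                · exact h1 i h' β' hiβ'
                · have : i = j := Fin.ext h'
                  subst this
                  rw [hσj] at hiβ'
                  rw [← Option.some_inj.mp hiβ']
                  exact hc
            · rw [if_neg h1]; ring
        have hQsplit : Qv σ a (j:ℕ) = Qv σ a ((j:ℕ)+1) * (if sVal σ j β = -a then 1 else 0) := by
          unfold Qv
          by_cases h : Qs σ a (j:ℕ)
          · rw [if_pos h, if_pos, if_pos]
            · norm_num
            · exact h j (le_refl _) β hσj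
            · intro i hi β' hiβ'; exact h i (by omega) β' hiβ'
          · rw [if_neg h]
            by_cases h1 : Qs σ a ((j:ℕ)+1)
            · rw [if_pos h1]
              rw [if_neg]
              · ring
              · intro hc
                apply h
                intro i hi β' hiβ'
                rcases Nat.lt_or_ge (j:ℕ) (i:ℕ) with h' | h'
                · exact h1 i (by omega) β' hiβ'
                · have : i = j := Fin.ext (le_antisymm h' hi)
                  subst this
                  rw [hσj] at hiβ'
                  rw [← Option.some_inj.mp hiβ']
                  exact hc
            · rw [if_neg h1]; ring
        have hsval : sVal σ j β = 1 ∨ sVal σ j β = -1 := by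
          unfold sVal
          rcases Nat.even_or_odd ((j:ℕ)+1+Cell.sLe σ j) with he | he
          · rw [he.neg_one_pow]; cases β <;> simp [sgn]
          · rw [he.neg_one_pow]; cases β <;> simp [sgn]
        have hcase : sVal σ j β = a ∨ sVal σ j β = -a := by
          rcases ha with rfl | rfl
          · exact hsval
          · rcases hsval with h | h
            · right; rw [h]; norm_num
            · left; exact h
        rw [hb, hval, hsign]
        rcases hcase with hc | hc
        · rw [hPsplit, hQsplit, if_pos hc, if_neg (by rw [hc]; exact fun h => hane h.symm), hc]
          ring
        · rw [hPsplit, hQsplit, if_neg (by rw [hc]; exact fun h => hane h),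
            if_pos hc, hc]
          have haa : a * a = 1 := by rcases ha with rfl | rfl <;> norm_num
          nlinarith [haa]
    rw [Finset.sum_congr rfl (fun j _ => term j)]
    rw [Fin.sum_univ_eq_sum_range
      (fun m => a * (Pv σ a (m+1) * Qv σ a (m+1)) - a * (Pv σ a m * Qv σ a m))]
    rw [Finset.sum_range_sub (fun m => a * (Pv σ a m * Qv σ a m))]
    have hP0 : Pv σ a 0 = 1 := by
      rw [Pv, if_pos]; intro i hi; omega
    have hQn : Qv σ a n = 1 := by
      rw [Qv, if_pos]; intro i hi; exact absurd i.isLt (by omega)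
    have hPn : Pv σ a n = (if ExtremeSign σ a then 1 else 0) := by
      rw [Pv]
      congr 1
      rw [Ps, ExtremeSign]
      simp only [eq_iff_iff]
      constructor
      · intro h i β hiβ; exact h i i.isLt β hiβ
      · intro h i _ β hiβ; exact h i β hiβ
    have hQ0 : Qv σ a 0 = (if ExtremeSign σ (-a) then 1 else 0) := by
      rw [Qv]
      congr 1
      rw [Qs, ExtremeSign]
      simp only [eq_iff_iff]
      constructor
      · intro h i β hiβ; exact h i (Nat.zero_le _) β hiβ
      · intro h i _ β hiβ; exact h i β hiβ
    rw [hPn, hQn, hP0, hQ0]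
    have e1 : (if Cell.dim σ = p ∧ ExtremeSign σ 1 then (1:ℤ) else 0) =
        (if ExtremeSign σ 1 then (1:ℤ) else 0) := by
      by_cases h : ExtremeSign σ 1
      · rw [if_pos ⟨hdim, h⟩, if_pos h]
      · rw [if_neg (fun hh => h hh.2), if_neg h]
    have e2 : (if Cell.dim σ = p ∧ ExtremeSign σ (-1) then (1:ℤ) else 0) =
        (if ExtremeSign σ (-1) then (1:ℤ) else 0) := by
      by_cases h : ExtremeSign σ (-1)
      · rw [if_pos ⟨hdim, h⟩, if_pos h]
      · rw [if_neg (fun hh => h hh.2), if_neg h]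
    rw [e1, e2]
    rcases ha with rfl | rfl
    · norm_num
    · have h11 : (-(-1):ℤ) = 1 := by norm_num
      rw [h11]
      by_cases h1 : ExtremeSign σ 1 <;> by_cases h2 : ExtremeSign σ (-1) <;>
        simp [h1, h2]
  · rw [if_neg (fun h => hdim h.1), if_neg (fun h => hdim h.1)]
    rw [sub_zero]
    apply Finset.sum_eq_zero
    intro j _
    rcases hσj : σ j with _ | β
    · unfold bdCoef; rw [hσj]
    · have hjne : σ j ≠ none := by rw [hσj]; exact fun h => by cases h
      have hb : bdCoef (ext n (p+1) a) σ j =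
          (-1:ℤ)^(Cell.below σ j) * sgn β * (ext n (p+1) a) (Function.update σ j none) := by
        unfold bdCoef; rw [hσj]
      rw [hb, ext_apply, if_neg, mul_zero]
      rintro ⟨h1, _⟩
      rw [dim_update_none σ j hjne] at h1
      omega


lemma sLt_update {n : ℕ} (σ : Cell n) (j : Fin n) (v : Option Bool) (i : Fin n)
    (h : i ≤ j) : Cell.sLt (Function.update σ j v) i = σ.sLt i := by
  classical
  rw [Cell.sLt, Cell.sLt]
  congr 1
  apply Finset.filter_congr
  intro x _
  by_cases hx : x < i
  · rw [Function.update_of_ne (by exact ne_of_lt (lt_of_lt_of_le hx h))]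
  · simp [hx]

lemma dim_un (n : ℕ) : Cell.dim (un n) = n := by
  simp [Cell.dim, un]

lemma eq_un_of_dim {n : ℕ} (τ : Cell n) (h : Cell.dim τ = n) : τ = un n := by
  classical
  have hu : (Finset.univ.filter fun i => τ i = none) = Finset.univ := by
    apply Finset.eq_univ_of_card
    rw [show (Finset.univ.filter fun i => τ i = none).card = Cell.dim τ from rfl, h]
    simp
  funext i
  have hmem : i ∈ Finset.univ.filter fun i => τ i = none := by
    rw [hu]; exact Finset.mem_univ i
  exact (Finset.mem_filter.mp hmem).2

lemma extreme_un (n : ℕ) (a : ℤ) : ExtremeSign (un n) a := by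
  intro j α h
  simp [un] at h

lemma ext_top (n : ℕ) (a : ℤ) : ext n n a = Finsupp.single (un n) 1 := by
  classical
  ext τ
  rw [ext_apply, Finsupp.single_apply]
  by_cases h : τ = un n
  · subst h
    rw [if_pos ⟨dim_un n, extreme_un n a⟩, if_pos rfl]
  · rw [if_neg, if_neg (fun hh => h hh.symm)]
    rintro ⟨h1, _⟩
    exact h (eq_un_of_dim τ h1)

lemma not_both_extreme {n p : ℕ} (hp : p < n) (σ : Cell n) (hdim : Cell.dim σ = p) :
    ¬ (ExtremeSign σ 1 ∧ ExtremeSign σ (-1)) := by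
  classical
  rintro ⟨h1, h2⟩
  have hne : ∃ j : Fin n, σ j ≠ none := by
    by_contra hc
    push_neg at hc
    have : σ = un n := funext fun i => hc i
    rw [this, dim_un] at hdim
    omega
  obtain ⟨j, hj⟩ := hne
  rcases hβ : σ j with _ | β
  · exact hj hβ
  · have e1 := h1 j β hβ
    have e2 := h2 j β hβ
    rw [e1] at e2
    norm_num at e2

lemma posPart_key {n p : ℕ} (hp : p < n) :
    posPart (ext n p 1 - ext n p (-1)) = ext n p 1 := by
  classical
  ext σ
  rw [posPart, Finsupp.mapRange_apply, Finsupp.sub_apply, ext_apply, ext_apply]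
  by_cases h1 : Cell.dim σ = p ∧ ExtremeSign σ 1 <;>
    by_cases h2 : Cell.dim σ = p ∧ ExtremeSign σ (-1)
  · exact absurd ⟨h1.2, h2.2⟩ (not_both_extreme hp σ h1.1)
  · rw [if_pos h1, if_neg h2]; norm_num
  · rw [if_neg h1, if_pos h2]; norm_num
  · rw [if_neg h1, if_neg h2]; norm_num

lemma negPart_key {n p : ℕ} (hp : p < n) :
    negPart (ext n p 1 - ext n p (-1)) = ext n p (-1) := by
  classical
  ext σ
  rw [negPart, Finsupp.mapRange_apply, Finsupp.sub_apply, ext_apply, ext_apply]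
  by_cases h1 : Cell.dim σ = p ∧ ExtremeSign σ 1 <;>
    by_cases h2 : Cell.dim σ = p ∧ ExtremeSign σ (-1)
  · exact absurd ⟨h1.2, h2.2⟩ (not_both_extreme hp σ h1.1)
  · rw [if_pos h1, if_neg h2]; norm_num
  · rw [if_neg h1, if_pos h2]; norm_num
  · rw [if_neg h1, if_neg h2]; norm_num

lemma sgn_cases (α : Bool) : sgn α = 1 ∨ sgn α = -1 := by cases α <;> simp [sgn]

lemma atom_un_aux (n : ℕ) (α : Bool) : ∀ d, d ≤ n →
    (bdp α)^[d] (Finsupp.single (un n) 1) = ext n (n - d) (sgn α) := by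
  intro d
  induction d with
  | zero =>
    intro _
    rw [Function.iterate_zero, id_eq, Nat.sub_zero]
    exact (ext_top n (sgn α)).symm
  | succ d ih =>
    intro hd
    rw [Function.iterate_succ_apply', ih (by omega)]
    have hstep : n - d = (n - (d+1)) + 1 := by omega
    rw [hstep]
    have hbd : bd (ext n (n - (d+1) + 1) (sgn α)) =
        ext n (n - (d+1)) 1 - ext n (n - (d+1)) (-1) :=
      key n (n - (d+1)) (by omega) (sgn α) (sgn_cases α)
    cases α
    · rw [bdp, if_neg (by simp), hbd]
      exact negPart_key (by omega)
    · rw [bdp, if_pos rfl, hbd]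
      exact posPart_key (by omega)

lemma atom_un (n p : ℕ) (hpn : p ≤ n) (α : Bool) :
    atom (un n) α p = ext n p (sgn α) := by
  rw [atom, dim_un, if_pos hpn, atom_un_aux n α (n - p) (by omega)]
  congr 1
  omega



open Classical in
lemma D_ext_apply {n : ℕ} (k : Fin n) (γ : Bool) (D : Chain n →ₗ[ℤ] Chain n)
    (hD0 : ∀ τ : Cell n, τ k = none → D (Finsupp.single τ 1) = 0)
    (hD1 : ∀ τ : Cell n, τ k = some γ → D (Finsupp.single τ 1) = 0)
    (hD2 : ∀ τ : Cell n, τ k = some (!γ) →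
      D (Finsupp.single τ 1) =
        (-((-1 : ℤ) ^ Cell.below τ k * sgn γ)) •
          Finsupp.single (Function.update τ k (none : Option Bool)) 1)
    (q : ℕ) (hq1 : 1 ≤ q) (α : Bool) (σ : Cell n) :
    D (ext n (q-1) (sgn α)) σ =
      if σ k = none ∧ Cell.dim σ = q ∧
          ExtremeSign (Function.update σ k (some (!γ))) (sgn α)
      then sgn α else 0 := by
  classical
  set c := ext n (q-1) (sgn α) with hcdef
  have hc : c = ∑ τ : Cell n, (c τ) • Finsupp.single τ 1 := by
    conv_lhs => rw [← Finsupp.sum_single c]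
    rw [Finsupp.sum_fintype _ _ (by intro; rw [Finsupp.single_zero])]
    apply Finset.sum_congr rfl
    intro τ _
    rw [Finsupp.smul_single', mul_one]
  rw [hc, map_sum, Finsupp.finset_sum_apply]
  set τ₀ := Function.update σ k (some (!γ)) with hτ₀
  have hτ₀k : τ₀ k = some (!γ) := Function.update_self k _ σ
  rw [Finset.sum_eq_single τ₀]
  · rw [map_smul, hD2 τ₀ hτ₀k, Finsupp.smul_apply, Finsupp.smul_apply,
      Finsupp.single_apply]
    have hupd : Function.update τ₀ k none = Function.update σ k none := by
      rw [hτ₀, Function.update_idem]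
    by_cases hσk : σ k = none
    · have hupdσ : Function.update τ₀ k none = σ := by
        rw [hupd]; exact (update_eq_iff' σ k none).mpr hσk
      rw [if_pos hupdσ]
      have hbelow : Cell.below τ₀ k = Cell.below σ k := below_update σ k _ k (le_refl k)
      have hdim' : Cell.dim τ₀ + 1 = Cell.dim σ := dim_update_some σ k hσk (!γ)
      by_cases hcond : Cell.dim σ = q ∧ ExtremeSign τ₀ (sgn α)
      · rw [if_pos ⟨hσk, hcond⟩]
        have hcτ₀ : c τ₀ = 1 := by
          rw [hcdef, ext_apply, if_pos ⟨by omega, hcond.2⟩]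
        have hESk := hcond.2 k (!γ) hτ₀k
        have hsLe : Cell.sLe τ₀ k = Cell.sLt σ k + 1 := by
          rw [sLe_eq_sLt_succ τ₀ k (by rw [hτ₀k]; exact fun h => by cases h)]
          rw [hτ₀, sLt_update σ k _ k (le_refl k)]
        have hpow : (-1:ℤ)^((k:ℕ)+1+Cell.sLe τ₀ k) = (-1:ℤ)^(Cell.below σ k) := by
          apply neg_one_pow_congr
          have e1 := below_add_sLt σ k
          omega
        rw [hpow, sgn_not] at hESk
        rw [hcτ₀, hbelow, smul_eq_mul, smul_eq_mul]
        linear_combination hESk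
      · rw [if_neg (fun h => hcond ⟨h.2.1, h.2.2⟩)]
        have hcτ₀ : c τ₀ = 0 := by
          rw [hcdef, ext_apply, if_neg]
          rintro ⟨h1, h2⟩
          exact hcond ⟨by omega, h2⟩
        rw [hcτ₀]
        simp
    · rw [if_neg, if_neg (fun h => hσk h.1)]
      · simp
      · intro h
        apply hσk
        have := congrFun h k
        rw [hupd, Function.update_self] at this
        exact this.symm
  · intro τ _ hne
    rcases hτk : τ k with _ | b
    · rw [map_smul, hD0 τ hτk]
      simp
    · by_cases hb : b = γ
      · subst hb
        rw [map_smul, hD1 τ hτk]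
        simp
      · have hbγ : b = !γ := by
          cases b <;> cases γ <;> first | rfl | exact absurd rfl hb
        subst hbγ
        rw [map_smul, hD2 τ hτk, Finsupp.smul_apply, Finsupp.smul_apply,
          Finsupp.single_apply, if_neg, smul_zero, smul_zero]
        intro h
        apply hne
        funext i
        by_cases hik : i = k
        · subst hik
          rw [hτk, hτ₀k]
        · rw [hτ₀, Function.update_of_ne hik]
          have := congrFun h i
          rwa [Function.update_of_ne hik] at this
  · intro h
    exact absurd (Finset.mem_univ _) h

/-- for `1 ≤ k ≤ n` (here `k : Fin n`, 0-indexed), a sign `γ` and the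
associated chain homotopy `D`, and for `1 ≤ q ≤ n`: the chains `D⟨u_n⟩_{q−1}^+` and
`−D⟨u_n⟩_{q−1}^−` are sums, with coefficient 1, of standard basis elements
`∂̌_{i(n−q)}^{α(n−q)} ⋯ ∂̌_{i(1)}^{α(1)} u_q` (i.e. `q`-dimensional basis elements)
corresponding to precubical operations complementary to `∂_k^γ`. -/
theorem homotopy_of_top_atom_is_sum_of_complementary_cells (n : ℕ) (k : Fin n) (γ : Bool)
    (D : Chain n →ₗ[ℤ] Chain n)
    (hD0 : ∀ τ : Cell n, τ k = none → D (Finsupp.single τ 1) = 0)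
    (hD1 : ∀ τ : Cell n, τ k = some γ → D (Finsupp.single τ 1) = 0)
    (hD2 : ∀ τ : Cell n, τ k = some (!γ) →
      D (Finsupp.single τ 1) =
        (-((-1 : ℤ) ^ Cell.below τ k * sgn γ)) •
          Finsupp.single (Function.update τ k (none : Option Bool)) 1)
    (q : ℕ) (hq1 : 1 ≤ q) (hq2 : q ≤ n) :
    (∀ τ : Cell n,
      (D (atom (un n) true (q - 1))) τ = 0 ∨ (D (atom (un n) true (q - 1))) τ = 1) ∧
    (∀ τ : Cell n, (D (atom (un n) true (q - 1))) τ ≠ 0 →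
      Cell.dim τ = q ∧ CellCompl k γ τ) ∧
    (∀ τ : Cell n,
      (-(D (atom (un n) false (q - 1)))) τ = 0 ∨
        (-(D (atom (un n) false (q - 1)))) τ = 1) ∧
    (∀ τ : Cell n, (-(D (atom (un n) false (q - 1)))) τ ≠ 0 →
      Cell.dim τ = q ∧ CellCompl k γ τ) := by
  classical
  have hqn : q - 1 ≤ n := by omega
  have hT : ∀ α : Bool, ∀ σ : Cell n, D (atom (un n) α (q-1)) σ =
      if σ k = none ∧ Cell.dim σ = q ∧
          ExtremeSign (Function.update σ k (some (!γ))) (sgn α)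
      then sgn α else 0 := by
    intro α σ
    rw [atom_un n (q-1) hqn α]
    exact D_ext_apply k γ D hD0 hD1 hD2 q hq1 α σ
  refine ⟨?_, ?_, ?_, ?_⟩
  · intro τ
    rw [hT true τ]
    by_cases h : τ k = none ∧ Cell.dim τ = q ∧
        ExtremeSign (Function.update τ k (some (!γ))) (sgn true)
    · right; rw [if_pos h]; rfl
    · left; rw [if_neg h]
  · intro τ hne
    rw [hT true τ] at hne
    by_cases h : τ k = none ∧ Cell.dim τ = q ∧
        ExtremeSign (Function.update τ k (some (!γ))) (sgn true)
    · exact ⟨h.2.1, h.1, sgn true, h.2.2⟩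
    · rw [if_neg h] at hne; exact absurd rfl hne
  · intro τ
    rw [Finsupp.neg_apply, hT false τ]
    by_cases h : τ k = none ∧ Cell.dim τ = q ∧
        ExtremeSign (Function.update τ k (some (!γ))) (sgn false)
    · right; rw [if_pos h]; rfl
    · left; rw [if_neg h]; rfl
  · intro τ hne
    rw [Finsupp.neg_apply, hT false τ] at hne
    by_cases h : τ k = none ∧ Cell.dim τ = q ∧
        ExtremeSign (Function.update τ k (some (!γ))) (sgn false)
    · exact ⟨h.2.1, h.1, sgn false, h.2.2⟩
    · rw [if_neg h] at hne; exact absurd rfl hne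

end CubicalNerve
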